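/- Let w : List (Fin d) → G be defined by w([s_0, …, s_{k-1}]) = b^{s_0} a b^{s_1} a ⋯ b^{s_{k-1}} a (and w([]) = e). Then for every m ∈ ℕ and every σ ∈ List (Fin d): b^m · w(σ) = w(act m σ) · b^{carry m σ}, and act m σ has the same length as σ. -/

import Mathlib

open scoped Classical

namespace BSpaper

/-- The single Baumslag–Solitar relator `a * b^c * (b^d * a)⁻¹` on two generators
(`true` plays the role of `a`, `false` the role of `b`). -/
def rels (c d : ℕ) : Set (FreeGroup Bool) :=
  {FreeGroup.of true * FreeGroup.of false ^ c * (FreeGroup.of false ^ d * FreeGroup.of true)⁻¹}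

/-- The Baumslag–Solitar group `BS(c,d) = ⟨a, b ∣ a b^c = b^d a⟩`. -/
abbrev Grp (c d : ℕ) := PresentedGroup (rels c d)

variable (c d : ℕ)

/-- The generator `a`. -/
def a : Grp c d := PresentedGroup.of true

/-- The generator `b`. -/
def b : Grp c d := PresentedGroup.of false

/-- The submonoid `P` of `BS(c,d)` generated by `a` and `b`. -/
def P : Submonoid (Grp c d) := Submonoid.closure {a c d, b c d}

/-- The word `b^{s₀} a b^{s₁} a ⋯ b^{s_{k-1}} a` associated to a list of digits `s_i < d`. -/
def wordStem : List (Fin d) → Grp c d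
  | [] => 1
  | i :: l => b c d ^ (i : ℕ) * a c d * wordStem l

/-- `Σ_k`: the set of stems of height `k`. -/
def SigmaSet (k : ℕ) : Set (Grp c d) :=
  {g | ∃ l : List (Fin d), l.length = k ∧ wordStem c d l = g}

/-- The data `(l, t)` of a normal-form decomposition `x = (b^{s₀} a ⋯ b^{s_{k-1}} a) * b^t`,
chosen by choice when it exists (it exists, uniquely, for every `x ∈ P`). -/
noncomputable def nf (x : Grp c d) : List (Fin d) × ℕ :=
  if h : ∃ p : List (Fin d) × ℕ, x = wordStem c d p.1 * b c d ^ p.2 then h.choose else ([], 0)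

/-- The stem of `x`, i.e. the stem part of the normal form of `x`. -/
noncomputable def stem (x : Grp c d) : Grp c d := wordStem c d (nf c d x).1

/-- The left-invariant partial order on `BS(c,d)`: `g ≤ h` iff `g⁻¹ * h ∈ P`. -/
def bsLe (g h : Grp c d) : Prop := g⁻¹ * h ∈ P c d

lemma a_mem_P : a c d ∈ P c d := Submonoid.subset_closure (Set.mem_insert _ _)

lemma b_mem_P : b c d ∈ P c d :=
  Submonoid.subset_closure (Set.mem_insert_of_mem _ rfl)

lemma wordStem_mem_P (l : List (Fin d)) : wordStem c d l ∈ P c d := by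
  induction l with
  | nil => exact one_mem _
  | cons i l ih =>
      exact mul_mem (mul_mem (pow_mem (b_mem_P c d) _) (a_mem_P c d)) ih

/-- `act m σ`: the digit string of the stem of `b^m · w(σ)`. -/
def act (c : ℕ) {d : ℕ} : ℕ → List (Fin d) → List (Fin d)
  | _, [] => []
  | m, i :: σ => ⟨(m + (i : ℕ)) % d, Nat.mod_lt _ i.pos⟩ :: act c (c * ((m + (i : ℕ)) / d)) σ

/-- `carry m σ`: the power of `b` emerging on the right when `b^m` is pulled through `w(σ)`. -/
def carry (c : ℕ) {d : ℕ} : ℕ → List (Fin d) → ℕ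
  | m, [] => m
  | m, i :: σ => carry c (c * ((m + (i : ℕ)) / d)) σ

lemma key : b c d ^ d * a c d = a c d * b c d ^ c := by
  have h : (QuotientGroup.mk (FreeGroup.of true * FreeGroup.of false ^ c *
      (FreeGroup.of false ^ d * FreeGroup.of true)⁻¹) : Grp c d) = 1 :=
    (QuotientGroup.eq_one_iff _).mpr (Subgroup.subset_normalClosure rfl)
  have h2 : a c d * b c d ^ c * (b c d ^ d * a c d)⁻¹ = 1 := by
    simpa [a, b, PresentedGroup.of] using
      (PresentedGroup.one_of_mem (rels := rels c d) (x := FreeGroup.of true * FreeGroup.of false ^ c *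
        (FreeGroup.of false ^ d * FreeGroup.of true)⁻¹) rfl)
  have := mul_eq_one_iff_eq_inv.mp h2
  simp at this
  rw [this]

lemma key_pow (q : ℕ) : (b c d ^ d) ^ q * a c d = a c d * (b c d ^ c) ^ q := by
  induction q with
  | zero => simp
  | succ n ih =>
      rw [pow_succ, mul_assoc, key, ← mul_assoc, ih, pow_succ, mul_assoc]


/-- With w([s₀, …, s_{k-1}]) = b^{s₀} a ⋯ b^{s_{k-1}} a, for every m ∈ ℕ and every
σ ∈ List (Fin d): b^m · w(σ) = w(act m σ) · b^(carry m σ), and act m σ has the same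
length as σ. -/
theorem statement13 (c d : ℕ) (hc : 0 < c) (hd : 0 < d) (m : ℕ) (σ : List (Fin d)) :
    b c d ^ m * wordStem c d σ = wordStem c d (act c m σ) * b c d ^ carry c m σ ∧
      (act c m σ).length = σ.length := by
  induction σ generalizing m with
  | nil => simp [act, carry, wordStem]
  | cons i σ ih =>
      refine ⟨?_, by simpa [act] using (ih _).2⟩
      have hdecomp : b c d ^ m * (b c d ^ (i : ℕ) * a c d) =
          b c d ^ ((m + (i : ℕ)) % d) * a c d * b c d ^ (c * ((m + (i : ℕ)) / d)) := by
        rw [← mul_assoc, ← pow_add]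
        conv_lhs => rw [← Nat.mod_add_div (m + (i : ℕ)) d, pow_add, pow_mul, mul_assoc,
          key_pow, ← pow_mul, ← mul_assoc]
      calc b c d ^ m * wordStem c d (i :: σ)
          = b c d ^ m * (b c d ^ (i : ℕ) * a c d) * wordStem c d σ := by
            simp [wordStem, mul_assoc]
        _ = b c d ^ ((m + (i : ℕ)) % d) * a c d *
              (b c d ^ (c * ((m + (i : ℕ)) / d)) * wordStem c d σ) := by
            rw [hdecomp]; group
        _ = wordStem c d (act c m (i :: σ)) * b c d ^ carry c m (i :: σ) := by
            rw [(ih _).1]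
            simp [act, carry, wordStem, mul_assoc]


end BSpaper
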